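/- For every real μ ∈ [0,1], the influence functional of infinite lexicographic functions satisfies I(1/2 + μ/4) = 1 + I(μ)/4 and I(1/2 − μ/4) = 1 + I(μ)/4, where I(μ) = Σ_i (k_i − 2i)·2^{1−k_i} over the binary expansion μ = Σ_i 2^{−k_i}. -/

import Mathlib

noncomputable section

/-- The k-th binary digit of μ (k ≥ 1 are the fractional positions). -/
def binBit (μ : ℝ) (k : ℕ) : ℕ := (⌊μ * 2 ^ k⌋).toNat % 2

/-- Number of 1-bits of μ at positions strictly before k. -/
def onesBefore (μ : ℝ) (k : ℕ) : ℕ := ∑ j ∈ Finset.range k, binBit μ j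

/-- Total influence of the infinite lexicographic function ℓ⟨μ⟩:
if μ = Σ_i 2^{-k_i} with 1 ≤ k_0 < k_1 < ⋯ the positions of the 1-bits,
this equals Σ_i (k_i − 2i) · 2^{1−k_i}. -/
def lexInfluence (μ : ℝ) : ℝ :=
  ∑' k : ℕ, (binBit μ k : ℝ) * ((k : ℝ) - 2 * (onesBefore μ k : ℝ)) * (2 : ℝ) ^ (1 - (k : ℤ))

namespace LexShiftAux


open Finset

lemma binBit_le_one (μ : ℝ) (k : ℕ) : binBit μ k ≤ 1 :=
  Nat.lt_succ_iff.mp (Nat.mod_lt _ two_pos)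

lemma onesBefore_le (μ : ℝ) (k : ℕ) : onesBefore μ k ≤ k := by
  calc onesBefore μ k ≤ ∑ _j ∈ range k, 1 := Finset.sum_le_sum fun j _ => binBit_le_one μ j
  _ = k := by simp

def term (μ : ℝ) (k : ℕ) : ℝ :=
  (binBit μ k : ℝ) * ((k : ℝ) - 2 * (onesBefore μ k : ℝ)) * (2 : ℝ) ^ (1 - (k : ℤ))

lemma lexInfluence_eq (μ : ℝ) : lexInfluence μ = ∑' k, term μ k := rfl

lemma zpow_eq (k : ℕ) : (2:ℝ) ^ (1 - (k:ℤ)) = 2 * (1/2:ℝ)^k := by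
  rw [zpow_sub₀ (two_ne_zero), zpow_one, zpow_natCast, div_pow, one_pow]
  ring

lemma zpow_pos' (k : ℕ) : (0:ℝ) < (2:ℝ) ^ (1 - (k:ℤ)) := zpow_pos two_pos _

lemma summable_kgeo : Summable (fun k : ℕ => (k:ℝ) * (1/2:ℝ)^k) := by
  simpa using summable_pow_mul_geometric_of_norm_lt_one 1 (r := (1/2:ℝ)) (by norm_num)

lemma summable_geo : Summable (fun k : ℕ => (1/2:ℝ)^k) :=
  summable_geometric_of_lt_one (by norm_num) (by norm_num)

lemma summable_of_bound {g : ℕ → ℝ} (a : ℝ) (h : ∀ k, |g k| ≤ (a * k + a) * (1/2:ℝ)^k) :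
    Summable g := by
  have hs : Summable (fun k : ℕ => (a * (k:ℝ) + a) * (1/2:ℝ)^k) := by
    have := (summable_kgeo.mul_left a).add (summable_geo.mul_left a)
    simpa [add_mul, mul_assoc] using this
  exact Summable.of_norm_bounded hs (fun k => by simpa [Real.norm_eq_abs] using h k)

/-- summability of terms of the shape bit * (k + A - 2 * partial) * 2^(1-k) -/
lemma summable_shape (x y : ℕ → ℕ) (hx : ∀ k, x k ≤ 1) (hy : ∀ k, y k ≤ k) (A : ℝ) :
    Summable (fun k => (x k : ℝ) * ((k:ℝ) + A - 2 * (y k:ℝ)) * (2:ℝ) ^ (1 - (k:ℤ))) := by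
  apply summable_of_bound (6 + 2 * |A|)
  intro k
  have h1 : |(x k : ℝ)| ≤ 1 := by
    rw [abs_of_nonneg (by positivity)]; exact_mod_cast hx k
  have h2 : |(k:ℝ) + A - 2 * (y k:ℝ)| ≤ 3 * k + |A| := by
    have hy' : (0:ℝ) ≤ (y k : ℝ) := by positivity
    have hy'' : (y k : ℝ) ≤ k := by exact_mod_cast hy k
    have hA := abs_le.mp (le_refl |A|)
    rw [abs_le]
    constructor <;> nlinarith [abs_nonneg A]
  have h3 : |(2:ℝ) ^ (1 - (k:ℤ))| = 2 * (1/2:ℝ)^k := by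
    rw [zpow_eq]; exact abs_of_nonneg (by positivity)
  calc |(x k : ℝ) * ((k:ℝ) + A - 2 * (y k:ℝ)) * (2:ℝ) ^ (1 - (k:ℤ))|
      ≤ 1 * (3 * k + |A|) * (2 * (1/2:ℝ)^k) := by
        rw [abs_mul, abs_mul, h3]
        apply mul_le_mul_of_nonneg_right _ (by positivity)
        exact mul_le_mul h1 h2 (abs_nonneg _) one_pos.le
    _ = ((3 * (k:ℝ) + |A|) * 2) * (1/2:ℝ)^k := by ring
    _ ≤ ((6 + 2*|A|) * k + (6 + 2*|A|)) * (1/2:ℝ)^k := by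
        apply mul_le_mul_of_nonneg_right _ (by positivity)
        nlinarith [abs_nonneg A, mul_nonneg (abs_nonneg A) (Nat.cast_nonneg (α := ℝ) k)]

lemma summable_term (μ : ℝ) : Summable (term μ) := by
  have := summable_shape (binBit μ) (onesBefore μ) (binBit_le_one μ) (onesBefore_le μ) 0
  refine this.congr (fun k => ?_)
  simp [term]

lemma tsum_geo : ∑' k : ℕ, (2:ℝ) ^ (1 - (k:ℤ)) = 4 := by
  simp only [zpow_eq]
  rw [tsum_mul_left, tsum_geometric_two]; norm_num

lemma tsum_kgeo : ∑' k : ℕ, (k:ℝ) * (2:ℝ) ^ (1 - (k:ℤ)) = 4 := by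
  simp only [zpow_eq]
  have h : ∑' k : ℕ, (k:ℝ) * (1/2:ℝ)^k = 2 := by
    rw [tsum_coe_mul_geometric_of_norm_lt_one (by norm_num)]; norm_num
  calc ∑' k : ℕ, (k:ℝ) * (2 * (1/2:ℝ)^k) = ∑' k : ℕ, 2 * ((k:ℝ) * (1/2:ℝ)^k) := by
        congr 1; funext k; ring
    _ = 4 := by rw [tsum_mul_left, h]; norm_num

/-- the swap identity: ∑ (partial sums) * 2^{-k} = ∑ u_k 2^{-k}. -/
lemma tsum_swap (u : ℕ → ℝ) (h0 : ∀ k, 0 ≤ u k) (h1 : ∀ k, u k ≤ 1) :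
    ∑' k : ℕ, (∑ j ∈ range k, u j) * (1/2:ℝ)^k = ∑' k : ℕ, u k * (1/2:ℝ)^k := by
  classical
  set f : ℕ → ℕ → ℝ := fun j k => if j < k then u j * (1/2:ℝ)^k else 0 with hf
  have hinner : ∀ j, ∑' k, f j k = u j * (1/2:ℝ)^j := by
    intro j
    have hinj : Function.Injective (fun m : ℕ => m + (j+1)) := add_left_injective (j+1)
    have hsupp : Function.support (f j) ⊆ Set.range (fun m : ℕ => m + (j+1)) := by
      intro k hk
      simp only [Function.mem_support, hf] at hk
      by_cases h : j < k
      · exact ⟨k - (j+1), by show k - (j+1) + (j+1) = k; omega⟩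
      · simp [h] at hk
    rw [← hinj.tsum_eq hsupp]
    have : ∀ m : ℕ, f j (m + (j+1)) = (u j * (1/2:ℝ)^(j+1)) * (1/2:ℝ)^m := by
      intro m
      simp only [hf, if_pos (by omega : j < m + (j+1))]
      rw [pow_add]
      ring
    rw [tsum_congr this, tsum_mul_left, tsum_geometric_two, pow_succ]
    ring
  have hsummJ : ∀ j, Summable (f j) := by
    intro j
    apply Summable.of_norm_bounded summable_geo
    intro k
    simp only [hf]
    by_cases h : j < k
    · simp only [if_pos h, Real.norm_eq_abs, abs_mul]
      rw [abs_of_nonneg (h0 j), abs_of_nonneg (by positivity)]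
      have := h1 j
      nlinarith [pow_nonneg (by norm_num : (0:ℝ) ≤ 1/2) k]
    · simp [h]
  have hnn : 0 ≤ Function.uncurry f := by
    intro p
    simp only [Function.uncurry, hf]
    by_cases h : p.1 < p.2
    · simp only [if_pos h]; have := h0 p.1; positivity
    · simp [h]
  have hsum : Summable (Function.uncurry f) := by
    rw [summable_prod_of_nonneg hnn]
    refine ⟨fun j => hsummJ j, ?_⟩
    apply Summable.of_norm_bounded summable_geo
    intro j
    simp only [Function.uncurry_apply_pair]
    rw [hinner j, Real.norm_eq_abs, abs_mul, abs_of_nonneg (h0 j),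
      abs_of_nonneg (by positivity)]
    have := h1 j
    nlinarith [pow_nonneg (by norm_num : (0:ℝ) ≤ 1/2) j]
  have hcomm := Summable.tsum_comm (f := f) hsum
  have hcol : ∀ k, ∑' j, f j k = (∑ j ∈ range k, u j) * (1/2:ℝ)^k := by
    intro k
    rw [tsum_eq_sum (s := range k)
      (by intro j hj; simp only [Finset.mem_range, not_lt] at hj
          simp only [hf]; rw [if_neg (by omega)])]
    rw [Finset.sum_mul]
    apply Finset.sum_congr rfl
    intro j hj
    simp only [hf]
    rw [if_pos (by simpa using hj)]
  calc ∑' k : ℕ, (∑ j ∈ range k, u j) * (1/2:ℝ)^k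
      = ∑' (k) (j), f j k := by rw [tsum_congr hcol]
    _ = ∑' (j) (k), f j k := hcomm
    _ = ∑' j, u j * (1/2:ℝ)^j := tsum_congr hinner



lemma ind4 (u : ℕ → ℝ) (n : ℕ) :
    (∑ k ∈ range n,
        (2 - (k:ℝ) + 2 * (∑ j ∈ range k, u j) - 2 * u k) * (2:ℝ) ^ (1 - (k:ℤ)))
      + (2 - 2*(n:ℝ) + 4 * (∑ j ∈ range n, u j)) * (2:ℝ) ^ (1 - (n:ℤ)) = 4 := by
  induction n with
  | zero => norm_num
  | succ n ih =>
    rw [Finset.sum_range_succ, Finset.sum_range_succ u]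
    have h2 : (2:ℝ) ^ (1 - ((n+1:ℕ):ℤ)) = (2:ℝ) ^ (1 - (n:ℤ)) / 2 := by
      push_cast
      rw [show (1 - ((n:ℤ)+1)) = (1 - (n:ℤ)) - 1 by ring, zpow_sub₀ two_ne_zero, zpow_one]
    rw [h2]
    push_cast
    linear_combination ih

lemma binBit_cast (μ : ℝ) (h0 : 0 ≤ μ) (k : ℕ) : ((binBit μ k : ℕ) : ℤ) = ⌊μ * 2^k⌋ % 2 := by
  have hf : 0 ≤ ⌊μ * 2^k⌋ := Int.floor_nonneg.mpr (by positivity)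
  unfold binBit
  push_cast
  rw [Int.toNat_of_nonneg hf]

lemma ceil_eq_floor_add (x : ℝ) (h : (⌊x⌋:ℝ) < x) : ⌈x⌉ = ⌊x⌋ + 1 := by
  have h1 : ⌈x⌉ ≤ ⌊x⌋ + 1 := Int.ceil_le.mpr (by push_cast; exact (Int.lt_floor_add_one x).le)
  have h2 : ⌊x⌋ < ⌈x⌉ := Int.lt_ceil.mpr h
  omega

lemma plus_case (μ : ℝ) (h0 : 0 ≤ μ) (h1 : μ ≤ 1) :
    lexInfluence (1/2 + μ/4) = 1 + lexInfluence μ / 4 := by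
  set ν : ℝ := 1/2 + μ/4 with hν
  have hb0 : binBit ν 0 = 0 := by
    have h : ⌊ν⌋ = 0 := by
      apply Int.floor_eq_zero_iff.mpr
      constructor <;> simp [hν] <;> linarith
    simp [binBit, h]
  have hb1 : binBit ν 1 = 1 := by
    have h : ⌊ν * 2⌋ = 1 := by
      rw [Int.floor_eq_iff]
      push_cast
      constructor <;> [skip; skip] <;> rw [hν] <;> linarith
    simp [binBit, h]
  have hbk : ∀ k, binBit ν (k+1+1) = binBit μ k := by
    intro k
    have he : ν * 2^(k+1+1) = μ * 2^k + ((2^(k+1) : ℤ) : ℝ) := by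
      rw [hν]; push_cast; ring
    have hfl : ⌊ν * 2^(k+1+1)⌋ = ⌊μ * 2^k⌋ + 2^(k+1) := by rw [he, Int.floor_add_intCast]
    have hnn : 0 ≤ ⌊μ * 2^k⌋ := Int.floor_nonneg.mpr (by positivity)
    have h2 : (2:ℤ)^(k+1) % 2 = 0 := by simp [pow_succ]
    have h2' : 0 ≤ (2:ℤ)^(k+1) := by positivity
    unfold binBit
    rw [hfl]
    omega
  have ho1 : onesBefore ν 1 = 0 := by simp [onesBefore, hb0]
  have hok : ∀ k, onesBefore ν (k+1+1) = 1 + onesBefore μ k := by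
    intro k
    unfold onesBefore
    rw [Finset.sum_range_succ' _ (k+1), Finset.sum_range_succ' _ k]
    simp only [hbk, hb1, hb0]
    omega
  have ht0 : term ν 0 = 0 := by simp [term, hb0]
  have ht1 : term ν 1 = 1 := by norm_num [term, hb1, ho1]
  have htk : ∀ k, term ν (k+1+1) = term μ k / 4 := by
    intro k
    unfold term
    rw [hbk, hok]
    have hz : (2:ℝ) ^ (1 - ((k+1+1:ℕ):ℤ)) = (2:ℝ)^(1 - (k:ℤ)) / 4 := by
      push_cast
      rw [show (1 - ((k:ℤ)+1+1)) = (1 - (k:ℤ)) - 2 by ring, zpow_sub₀ two_ne_zero]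
      norm_num
    rw [hz]
    push_cast
    ring
  have hs : Summable (term ν) := summable_term ν
  have hs1 : Summable (fun k => term ν (k+1)) := (summable_nat_add_iff 1).mpr hs
  rw [lexInfluence_eq, lexInfluence_eq, Summable.tsum_eq_zero_add hs, Summable.tsum_eq_zero_add hs1]
  rw [tsum_congr htk, ht0, ht1, tsum_div_const]
  ring



def cbit (μ : ℝ) (k : ℕ) : ℕ := (⌈μ * 2 ^ k⌉).toNat % 2
def conesBefore (μ : ℝ) (k : ℕ) : ℕ := ∑ j ∈ Finset.range k, cbit μ j
def cterm (μ : ℝ) (k : ℕ) : ℝ :=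
  (cbit μ k : ℝ) * ((k:ℝ) + 2 - 2 * (conesBefore μ k : ℝ)) * (2:ℝ) ^ (1 - (k:ℤ))

lemma cbit_le_one (μ : ℝ) (k : ℕ) : cbit μ k ≤ 1 := Nat.lt_succ_iff.mp (Nat.mod_lt _ two_pos)

lemma conesBefore_le (μ : ℝ) (k : ℕ) : conesBefore μ k ≤ k := by
  calc conesBefore μ k ≤ ∑ _j ∈ range k, 1 := Finset.sum_le_sum fun j _ => cbit_le_one μ j
  _ = k := by simp

lemma summable_cterm (μ : ℝ) : Summable (cterm μ) := by
  have := summable_shape (cbit μ) (conesBefore μ) (cbit_le_one μ) (conesBefore_le μ) 2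
  refine this.congr (fun k => ?_)
  simp [cterm]

lemma cbit_cast (μ : ℝ) (h0 : 0 ≤ μ) (k : ℕ) : ((cbit μ k : ℕ) : ℤ) = ⌈μ * 2^k⌉ % 2 := by
  have hf : 0 ≤ ⌈μ * 2^k⌉ := Int.ceil_nonneg (by positivity)
  unfold cbit
  push_cast
  rw [Int.toNat_of_nonneg hf]

/-- complementarity at non-dyadic positions -/
lemma cbit_comp (μ : ℝ) (h0 : 0 ≤ μ) (k : ℕ) (hk : ¬ ∃ m : ℤ, μ * 2^k = m) :
    cbit μ k + binBit μ k = 1 := by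
  have hle := Int.floor_le (μ * 2^k)
  have hlt : (⌊μ * 2^k⌋ : ℝ) < μ * 2^k :=
    lt_of_le_of_ne hle (fun h => hk ⟨⌊μ * 2^k⌋, h.symm⟩)
  have hceil := ceil_eq_floor_add _ hlt
  have e1 := cbit_cast μ h0 k
  have e2 := binBit_cast μ h0 k
  rw [hceil] at e1
  omega

/-- the minus case: lexInfluence (1/2 - μ/4) = 1 + lexInfluence μ / 4 -/
lemma minus_case (μ : ℝ) (h0 : 0 ≤ μ) (h1 : μ ≤ 1) :
    lexInfluence (1/2 - μ/4) = 1 + lexInfluence μ / 4 := by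
  rcases eq_or_lt_of_le h0 with h0' | h0'
  · -- μ = 0
    rw [← h0']
    have e : (1/2 - (0:ℝ)/4) = 1/2 + (0:ℝ)/4 := by norm_num
    rw [e]
    exact plus_case 0 le_rfl zero_le_one
  -- 0 < μ
  set ν : ℝ := 1/2 - μ/4 with hν
  have hb0 : binBit ν 0 = 0 := by
    have h : ⌊ν⌋ = 0 := by
      apply Int.floor_eq_zero_iff.mpr
      constructor <;> simp [hν] <;> linarith
    simp [binBit, h]
  have hb1 : binBit ν 1 = 0 := by
    have h : ⌊ν * 2⌋ = 0 :=
      Int.floor_eq_zero_iff.mpr ⟨by rw [hν]; linarith, by rw [hν]; linarith⟩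
    simp [binBit, h]
  have hbk : ∀ k, binBit ν (k+1+1) = cbit μ k := by
    intro k
    have he : ν * 2^(k+1+1) = -(μ * 2^k) + ((2^(k+1) : ℤ) : ℝ) := by
      rw [hν]; push_cast; ring
    have hfl : ⌊ν * 2^(k+1+1)⌋ = 2^(k+1) - ⌈μ * 2^k⌉ := by
      rw [he, Int.floor_add_intCast, Int.floor_neg]; ring
    have hnn : 0 ≤ ⌈μ * 2^k⌉ := Int.ceil_nonneg (by positivity)
    have hub : ⌈μ * 2^k⌉ ≤ 2^k := by
      apply Int.ceil_le.mpr
      push_cast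
      nlinarith [pow_pos (by norm_num : (0:ℝ) < 2) k]
    have h2 : (2:ℤ)^(k+1) = 2 * 2^k := by rw [pow_succ]; ring
    have e1 := cbit_cast μ h0 k
    unfold binBit
    rw [hfl, h2]
    unfold cbit at e1 ⊢
    omega
  have ho : ∀ k, onesBefore ν (k+1+1) = conesBefore μ k := by
    intro k
    unfold onesBefore conesBefore
    rw [Finset.sum_range_succ' _ (k+1), Finset.sum_range_succ' _ k]
    simp only [hbk, hb1, hb0]
    omega
  have ht0 : term ν 0 = 0 := by simp [term, hb0]
  have ht1 : term ν 1 = 0 := by simp [term, hb1]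
  have htk : ∀ k, term ν (k+1+1) = cterm μ k / 4 := by
    intro k
    unfold term cterm
    rw [hbk, ho]
    have hz : (2:ℝ) ^ (1 - ((k+1+1:ℕ):ℤ)) = (2:ℝ)^(1 - (k:ℤ)) / 4 := by
      push_cast
      rw [show (1 - ((k:ℤ)+1+1)) = (1 - (k:ℤ)) - 2 by ring, zpow_sub₀ two_ne_zero]
      norm_num
    rw [hz]
    push_cast
    ring
  have hs : Summable (term ν) := summable_term ν
  have hs1 : Summable (fun k => term ν (k+1)) := (summable_nat_add_iff 1).mpr hs
  have hsplit : lexInfluence ν = (∑' k, cterm μ k) / 4 := by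
    rw [lexInfluence_eq, Summable.tsum_eq_zero_add hs, Summable.tsum_eq_zero_add hs1,
      tsum_congr htk, ht0, ht1, tsum_div_const]
    ring
  -- now the key: ∑' cterm = 4 + lexInfluence μ
  have hkey : ∑' k, cterm μ k = 4 + lexInfluence μ := by
    by_cases hD : ∃ K : ℕ, ∃ m : ℤ, μ * 2^K = m
    · -- dyadic case
      classical
      set K := Nat.find hD with hKdef
      obtain ⟨m, hm⟩ : ∃ m : ℤ, μ * 2^K = m := Nat.find_spec hD
      have hmin : ∀ j, j < K → ¬ ∃ m : ℤ, μ * 2^j = m := fun j hj => Nat.find_min hD hj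
      have hm1 : 1 ≤ m := by
        have hp : (0:ℝ) < (m:ℝ) := by rw [← hm]; positivity
        have : (0:ℤ) < m := by exact_mod_cast hp
        omega
      have hmodd : m % 2 = 1 := by
        rcases Nat.eq_zero_or_pos K with hK0 | hKpos
        · have hle : (m:ℝ) ≤ 1 := by
            rw [← hm, hK0]; simpa using h1
          have : m ≤ 1 := by exact_mod_cast hle
          omega
        · by_contra hodd
          obtain ⟨t, rfl⟩ : ∃ t, m = 2*t := ⟨m/2, by omega⟩
          apply hmin (K-1) (by omega)
          refine ⟨t, ?_⟩
          have h2 : (2:ℝ)^K = 2^(K-1) * 2 := by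
            rw [← pow_succ]; congr 1; omega
          rw [h2] at hm
          push_cast at hm ⊢
          linarith
      have hfK : ⌊μ * 2^K⌋ = m := by rw [hm]; exact Int.floor_intCast m
      have hcK' : ⌈μ * 2^K⌉ = m := by rw [hm]; exact Int.ceil_intCast m
      have hbK : binBit μ K = 1 := by
        have := binBit_cast μ h0 K; rw [hfK, hmodd] at this; omega
      have hcKe : cbit μ K = 1 := by
        have := cbit_cast μ h0 K; rw [hcK', hmodd] at this; omega
      have htail : ∀ j, μ * 2^(K+1+j) = ((m * 2^(1+j) : ℤ) : ℝ) := by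
        intro j
        have e : μ * 2^(K+(1+j)) = (μ * 2^K) * 2^(1+j) := by rw [pow_add]; ring
        rw [show K+1+j = K+(1+j) by ring, e, hm]; push_cast; ring
      have hpar : ∀ j : ℕ, (m * 2^(1+j)) % 2 = 0 := by
        intro j
        have e : m * 2^(1+j) = 2 * (m * 2^j) := by rw [pow_add, pow_one]; ring
        omega
      have hbt : ∀ j, binBit μ (K+1+j) = 0 := by
        intro j
        have e := binBit_cast μ h0 (K+1+j)
        rw [htail j, Int.floor_intCast] at e
        have := hpar j
        omega
      have hct : ∀ j, cbit μ (K+1+j) = 0 := by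
        intro j
        have e := cbit_cast μ h0 (K+1+j)
        rw [htail j, Int.ceil_intCast] at e
        have := hpar j
        omega
      have hcomp : ∀ k, k < K → cbit μ k + binBit μ k = 1 :=
        fun k hk => cbit_comp μ h0 k (hmin k hk)
      have hCcast : ∀ k, k ≤ K → (conesBefore μ k : ℝ) = (k:ℝ) - (onesBefore μ k : ℝ) := by
        intro k hk
        have hcc : ∀ j ∈ range k, (cbit μ j : ℝ) = 1 - (binBit μ j : ℝ) := by
          intro j hj
          simp only [mem_range] at hj
          have h' := hcomp j (by omega)
          have : ((cbit μ j : ℕ) : ℝ) + ((binBit μ j : ℕ) : ℝ) = 1 := by exact_mod_cast congrArg (fun n : ℕ => (n:ℝ)) h'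
          linarith
        unfold conesBefore onesBefore
        push_cast
        rw [Finset.sum_congr rfl hcc, Finset.sum_sub_distrib, Finset.sum_const, card_range]
        ring
      have hI : lexInfluence μ = ∑ k ∈ range (K+1), term μ k := by
        rw [lexInfluence_eq]
        apply tsum_eq_sum
        intro k hk
        simp only [mem_range, not_lt] at hk
        obtain ⟨j, rfl⟩ : ∃ j, k = K+1+j := ⟨k - (K+1), by omega⟩
        simp [term, hbt j]
      have hS : ∑' k, cterm μ k = ∑ k ∈ range (K+1), cterm μ k := by
        apply tsum_eq_sum
        intro k hk
        simp only [mem_range, not_lt] at hk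
        obtain ⟨j, rfl⟩ : ∃ j, k = K+1+j := ⟨k - (K+1), by omega⟩
        simp [cterm, hct j]
      have hfin : ∑ k ∈ range (K+1), (cterm μ k - term μ k) = 4 := by
        have hind := ind4 (fun j => ((binBit μ j : ℕ) : ℝ)) K
        rw [Finset.sum_range_succ]
        have e1 : ∀ k ∈ range K, cterm μ k - term μ k =
            (2 - (k:ℝ) + 2 * (∑ j ∈ range k, ((binBit μ j:ℕ):ℝ))
              - 2 * ((binBit μ k:ℕ):ℝ)) * (2:ℝ)^(1-(k:ℤ)) := by
          intro k hk
          simp only [mem_range] at hk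
          have h' := hcomp k hk
          have hc : (cbit μ k : ℝ) = 1 - (binBit μ k : ℝ) := by
            have : ((cbit μ k : ℕ) : ℝ) + ((binBit μ k : ℕ) : ℝ) = 1 := by exact_mod_cast congrArg (fun n : ℕ => (n:ℝ)) h'
            linarith
          have hB : (onesBefore μ k : ℝ) = ∑ j ∈ range k, ((binBit μ j:ℕ):ℝ) := by
            unfold onesBefore; push_cast; rfl
          unfold cterm term
          rw [hc, hCcast k (le_of_lt hk), hB]
          ring
        have e2 : cterm μ K - term μ K =
            (2 - 2*(K:ℝ) + 4 * (∑ j ∈ range K, ((binBit μ j:ℕ):ℝ))) * (2:ℝ)^(1-(K:ℤ)) := by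
          have hB : (onesBefore μ K : ℝ) = ∑ j ∈ range K, ((binBit μ j:ℕ):ℝ) := by
            unfold onesBefore; push_cast; rfl
          unfold cterm term
          rw [hCcast K le_rfl, hbK, hcKe, hB]
          push_cast
          ring
        rw [Finset.sum_congr rfl e1, e2]
        exact hind
      rw [hS, hI]
      rw [Finset.sum_sub_distrib] at hfin
      linarith
    · -- non-dyadic case
      have hcomp : ∀ k, cbit μ k + binBit μ k = 1 :=
        fun k => cbit_comp μ h0 k (fun ⟨m, hmm⟩ => hD ⟨k, m, hmm⟩)
      have hcast1 : ∀ k, (cbit μ k : ℝ) = 1 - (binBit μ k : ℝ) := by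
        intro k
        have : ((cbit μ k : ℕ) : ℝ) + ((binBit μ k : ℕ) : ℝ) = 1 := by exact_mod_cast congrArg (fun n : ℕ => (n:ℝ)) (hcomp k)
        linarith
      have hCcast : ∀ k, (conesBefore μ k : ℝ) = (k:ℝ) - (onesBefore μ k : ℝ) := by
        intro k
        unfold conesBefore onesBefore
        push_cast
        rw [Finset.sum_congr rfl (fun j _ => hcast1 j), Finset.sum_sub_distrib,
          Finset.sum_const, card_range]
        ring
      have hpt : ∀ k, cterm μ k = term μ k +
          ((2 * ((2:ℝ)^(1-(k:ℤ))) - (k:ℝ) * (2:ℝ)^(1-(k:ℤ)))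
            + 2 * (((onesBefore μ k : ℝ) - (binBit μ k : ℝ)) * (2:ℝ)^(1-(k:ℤ)))) := by
        intro k
        unfold cterm term
        rw [hcast1 k, hCcast k]
        ring
      have sg1 : Summable (fun k : ℕ => (2:ℝ)^(1-(k:ℤ))) := by
        apply Summable.congr (summable_geo.mul_left 2)
        intro k
        rw [zpow_eq]
      have sg2 : Summable (fun k : ℕ => (k:ℝ) * (2:ℝ)^(1-(k:ℤ))) := by
        apply Summable.congr (summable_kgeo.mul_left 2)
        intro k
        rw [zpow_eq]
        ring
      have sB : Summable (fun k : ℕ => (onesBefore μ k : ℝ) * (2:ℝ)^(1-(k:ℤ))) := by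
        apply Summable.of_nonneg_of_le (fun k => by positivity) _ sg2
        intro k
        apply mul_le_mul_of_nonneg_right _ (le_of_lt (zpow_pos two_pos _))
        exact_mod_cast onesBefore_le μ k
      have sb : Summable (fun k : ℕ => (binBit μ k : ℝ) * (2:ℝ)^(1-(k:ℤ))) := by
        apply Summable.of_nonneg_of_le (fun k => by positivity) _ sg1
        intro k
        calc (binBit μ k : ℝ) * (2:ℝ)^(1-(k:ℤ))
            ≤ 1 * (2:ℝ)^(1-(k:ℤ)) := by
              apply mul_le_mul_of_nonneg_right _ (le_of_lt (zpow_pos two_pos _))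
              exact_mod_cast binBit_le_one μ k
          _ = (2:ℝ)^(1-(k:ℤ)) := one_mul _
      have sg3 : Summable (fun k : ℕ =>
          ((onesBefore μ k : ℝ) - (binBit μ k : ℝ)) * (2:ℝ)^(1-(k:ℤ))) := by
        apply Summable.congr (sB.sub sb)
        intro k
        ring
      have tg3 : ∑' k, ((onesBefore μ k : ℝ) - (binBit μ k : ℝ)) * (2:ℝ)^(1-(k:ℤ)) = 0 := by
        have e0 : ∑' k, ((onesBefore μ k : ℝ) - (binBit μ k : ℝ)) * (2:ℝ)^(1-(k:ℤ))
            = ∑' k, ((onesBefore μ k : ℝ) * (2:ℝ)^(1-(k:ℤ))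
              - (binBit μ k : ℝ) * (2:ℝ)^(1-(k:ℤ))) := by
          apply tsum_congr
          intro k
          ring
        rw [e0, Summable.tsum_sub sB sb]
        have hsw := tsum_swap (fun k => ((binBit μ k : ℕ) : ℝ)) (fun k => by positivity)
          (fun k => by show ((binBit μ k : ℕ) : ℝ) ≤ 1; exact_mod_cast binBit_le_one μ k)
        have e1 : ∑' k, (onesBefore μ k:ℝ)*(2:ℝ)^(1-(k:ℤ))
            = 2 * ∑' k, (∑ j ∈ range k, ((binBit μ j : ℕ):ℝ)) * (1/2:ℝ)^k := by
          rw [← tsum_mul_left]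
          apply tsum_congr
          intro k
          rw [zpow_eq]
          unfold onesBefore
          push_cast
          ring
        have e2 : ∑' k, (binBit μ k:ℝ)*(2:ℝ)^(1-(k:ℤ))
            = 2 * ∑' k, ((binBit μ k : ℕ):ℝ) * (1/2:ℝ)^k := by
          rw [← tsum_mul_left]
          apply tsum_congr
          intro k
          rw [zpow_eq]
          ring
        rw [e1, e2, hsw]
        ring
      rw [tsum_congr hpt,
        Summable.tsum_add (summable_term μ) (((sg1.mul_left 2).sub sg2).add (sg3.mul_left 2)),
        Summable.tsum_add ((sg1.mul_left 2).sub sg2) (sg3.mul_left 2),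
        Summable.tsum_sub (sg1.mul_left 2) sg2, tsum_mul_left, tsum_mul_left,
        tsum_geo, tsum_kgeo, tg3, lexInfluence_eq]
      ring
  rw [hsplit, hkey]
  ring

end LexShiftAux

/-- I(1/2 + μ/4) = 1 + I(μ)/4 and I(1/2 − μ/4) = 1 + I(μ)/4. -/
theorem lexInfluence_half_shift (μ : ℝ) (h0 : 0 ≤ μ) (h1 : μ ≤ 1) :
    lexInfluence (1 / 2 + μ / 4) = 1 + lexInfluence μ / 4 ∧
    lexInfluence (1 / 2 - μ / 4) = 1 + lexInfluence μ / 4 :=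
  ⟨LexShiftAux.plus_case μ h0 h1, LexShiftAux.minus_case μ h0 h1⟩
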